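/- Let R be a braiding (satisfying the braid relation) and suppose there exists an N×N matrix C such that RₖCₖCₖ₊₁ = CₖCₖ₊₁Rₖ. Define the R-trace of X ∈ End(V⊗ᵏ) by Tr_{R(1…k)}X = Tr_{(1…k)}(C₁C₂⋯Cₖ·X). Then the cyclic property holds: Tr_{R(1…k)}(f(R₁,…,Rₖ₋₁)·X) = Tr_{R(1…k)}(X·f(R₁,…,Rₖ₋₁)) for any polynomial f in the operators R₁,…,Rₖ₋₁. -/

import Mathlib

open Matrix BigOperators

noncomputable section

/-- The operator on `n` tensor factors of `ℂ^N` acting as the two-site operator `R`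
at (0-indexed) tensor positions `i, i+1` and as the identity elsewhere
(junk value `0` if `i+1 ≥ n`). -/
def opAt {A : Type} [Ring A] {N n : ℕ}
    (R : Matrix (Fin N × Fin N) (Fin N × Fin N) A) (i : ℕ) :
    Matrix (Fin n → Fin N) (Fin n → Fin N) A :=
  fun f g =>
    if h : i + 1 < n then
      if ∀ j : Fin n, (j : ℕ) ≠ i → (j : ℕ) ≠ i + 1 → f j = g j then
        R (f ⟨i, Nat.lt_of_succ_lt h⟩, f ⟨i + 1, h⟩)
          (g ⟨i, Nat.lt_of_succ_lt h⟩, g ⟨i + 1, h⟩)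
      else 0
    else 0

/-- The operator on `n` tensor factors acting as the one-site matrix `M`
at (0-indexed) position `i` and as the identity elsewhere. -/
def matAt {A : Type} [Ring A] {N n : ℕ}
    (M : Matrix (Fin N) (Fin N) A) (i : ℕ) :
    Matrix (Fin n → Fin N) (Fin n → Fin N) A :=
  fun f g =>
    if h : i < n then
      if ∀ j : Fin n, (j : ℕ) ≠ i → f j = g j then M (f ⟨i, h⟩) (g ⟨i, h⟩) else 0
    else 0

/-- The `q`-number `k_q = (q^k - q^{-k})/(q - q^{-1})`. -/
def qInt (q : ℂ) (k : ℕ) : ℂ := (q ^ k - q⁻¹ ^ k) / (q - q⁻¹)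

/-- The trigonometric (Hecke) Baxterized current operator
`R(u,v) = R - ((q - q⁻¹) u/(u - v)) I`. -/
def trigCur {N : ℕ} (R : Matrix (Fin N × Fin N) (Fin N × Fin N) ℂ) (q u v : ℂ) :
    Matrix (Fin N × Fin N) (Fin N × Fin N) ℂ :=
  R - (((q - q⁻¹) * u) / (u - v)) • 1

/-- The rational Baxterized current operator `R(u,v) = R - (1/(u - v)) I`. -/
def ratCur {N : ℕ} (R : Matrix (Fin N × Fin N) (Fin N × Fin N) ℂ) (u v : ℂ) :
    Matrix (Fin N × Fin N) (Fin N × Fin N) ℂ :=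
  R - ((u - v)⁻¹ : ℂ) • 1

/-- The Hecke skew-symmetrizers `A^{(k)}` starting at (0-indexed) tensor position `s`,
defined by the recursion
`A^{(k+1)} = (k_q/(k+1)_q) A^{(k)} ((q^k/k_q) I - R_{s+k-1}) A^{(k)}`. -/
def skewSym {A : Type} [Ring A] [Algebra ℂ A] {N n : ℕ}
    (R : Matrix (Fin N × Fin N) (Fin N × Fin N) A) (q : ℂ) :
    ℕ → ℕ → Matrix (Fin n → Fin N) (Fin n → Fin N) A
  | 0, _ => 1
  | 1, _ => 1
  | (k + 2), s =>
      (qInt q (k + 1) / qInt q (k + 2)) •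
        (skewSym R q (k + 1) s *
          ((q ^ (k + 1) / qInt q (k + 1)) • (1 : Matrix (Fin n → Fin N) (Fin n → Fin N) A)
            - opAt R (s + k)) *
          skewSym R q (k + 1) s)

/-- The copies `L_{\overline{k+1}} = R_k L_{\overline k} R_k^{-1}` of a one-site matrix `L`
(0-indexed: `lCopy R Rinv L 0 = L₁`). -/
def lCopy {A : Type} [Ring A] {N n : ℕ}
    (R Rinv : Matrix (Fin N × Fin N) (Fin N × Fin N) A)
    (L : Matrix (Fin N) (Fin N) A) : ℕ → Matrix (Fin n → Fin N) (Fin n → Fin N) A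
  | 0 => matAt L 0
  | (k + 1) => opAt R k * lCopy R Rinv L k * opAt Rinv k

/-- The `n`-fold tensor power `C ⊗ ⋯ ⊗ C` of a one-site matrix. -/
def cProd {N n : ℕ} (C : Matrix (Fin N) (Fin N) ℂ) :
    Matrix (Fin n → Fin N) (Fin n → Fin N) ℂ :=
  fun f g => ∏ j, C (f j) (g j)

/-- Two-site tensor square `C ⊗ C`. -/
def cTwo {N : ℕ} (C : Matrix (Fin N) (Fin N) ℂ) :
    Matrix (Fin N × Fin N) (Fin N × Fin N) ℂ :=
  fun a b => C a.1 b.1 * C a.2 b.2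

/-- Weighted partial trace over the second factor: `Tr₍₂₎(C₂ X)`. -/
def ptr2 {N : ℕ} (C : Matrix (Fin N) (Fin N) ℂ)
    (X : Matrix (Fin N × Fin N) (Fin N × Fin N) ℂ) : Matrix (Fin N) (Fin N) ℂ :=
  fun i j => ∑ a, ∑ b, C a b * X (i, b) (j, a)

/-- Lift a complex matrix to a matrix over a `ℂ`-algebra `A`. -/
def lift (A : Type) [Ring A] [Algebra ℂ A] {m : Type} (X : Matrix m m ℂ) : Matrix m m A :=
  X.map (algebraMap ℂ A)
/-- Reindexing a sum over functions that vanishes unless the function agrees with `g`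
away from positions `i, i+1`. -/
lemma sum_reindex_two {n N : ℕ} {i : ℕ} (hi : i + 1 < n) (g : Fin n → Fin N)
    (T : (Fin n → Fin N) → ℂ)
    (hT : ∀ h : Fin n → Fin N,
      ¬(∀ j : Fin n, (j : ℕ) ≠ i → (j : ℕ) ≠ i + 1 → h j = g j) → T h = 0) :
    ∑ h, T h = ∑ p : Fin N × Fin N,
      T (Function.update (Function.update g ⟨i, Nat.lt_of_succ_lt hi⟩ p.1) ⟨i + 1, hi⟩ p.2) := by
  set i0 : Fin n := ⟨i, Nat.lt_of_succ_lt hi⟩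
  set i1 : Fin n := ⟨i + 1, hi⟩
  have hne : i0 ≠ i1 := by
    simp only [i0, i1, Fin.ne_iff_vne]
    omega
  set P : (Fin n → Fin N) → Prop :=
    fun h => ∀ j : Fin n, (j : ℕ) ≠ i → (j : ℕ) ≠ i + 1 → h j = g j with hP
  have h1 : ∑ h, T h = ∑ h ∈ Finset.univ.filter P, T h := by
    refine (Finset.sum_filter_of_ne ?_).symm
    intro h _ hne
    by_contra hc
    exact hne (hT h hc)
  rw [h1]
  refine Finset.sum_nbij' (i := fun h => (h i0, h i1))
    (j := fun p => Function.update (Function.update g i0 p.1) i1 p.2)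
    ?_ ?_ ?_ ?_ ?_
  · intro a _; exact Finset.mem_univ _
  · intro p _
    rw [Finset.mem_filter]
    refine ⟨Finset.mem_univ _, fun j hj0 hj1 => ?_⟩
    have hj0' : j ≠ i0 := by simp [i0, Fin.ne_iff_vne, hj0]
    have hj1' : j ≠ i1 := by simp [i1, Fin.ne_iff_vne, hj1]
    simp only [Function.update_of_ne hj1', Function.update_of_ne hj0']
  · intro h hh
    rw [Finset.mem_filter] at hh
    funext j
    by_cases hj1 : j = i1
    · subst hj1; simp only [Function.update_self]
    · simp only [Function.update_of_ne hj1]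
      by_cases hj0 : j = i0
      · subst hj0; simp only [Function.update_self]
      · simp only [Function.update_of_ne hj0]
        refine (hh.2 j ?_ ?_).symm
        · simpa [i0, Fin.ne_iff_vne] using hj0
        · simpa [i1, Fin.ne_iff_vne] using hj1
  · intro p _
    simp [Function.update_self, Function.update_of_ne hne]
  · intro h hh
    congr 1
    rw [Finset.mem_filter] at hh
    funext j
    by_cases hj1 : j = i1
    · subst hj1; simp only [Function.update_self]
    · simp only [Function.update_of_ne hj1]
      by_cases hj0 : j = i0
      · subst hj0; simp only [Function.update_self]
      · simp only [Function.update_of_ne hj0]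
        refine hh.2 j ?_ ?_
        · simpa [i0, Fin.ne_iff_vne] using hj0
        · simpa [i1, Fin.ne_iff_vne] using hj1

/-- `C ⊗ ⋯ ⊗ C` commutes with each `R_i`, given `R (C⊗C) = (C⊗C) R`. -/
lemma cProd_comm_opAt {N n : ℕ}
    (R : Matrix (Fin N × Fin N) (Fin N × Fin N) ℂ) (C : Matrix (Fin N) (Fin N) ℂ)
    (hRC : R * cTwo C = cTwo C * R) {i : ℕ} (hi : i + 1 < n) :
    cProd (n := n) C * opAt R i = opAt R i * cProd (n := n) C := by
  ext f g
  set i0 : Fin n := ⟨i, Nat.lt_of_succ_lt hi⟩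
  set i1 : Fin n := ⟨i + 1, hi⟩
  have hne : i0 ≠ i1 := by
    simp only [i0, i1, Fin.ne_iff_vne]
    omega
  set s : Finset (Fin n) := {i0, i1} with hs
  have hupd : ∀ (g : Fin n → Fin N) (p : Fin N × Fin N),
      (∀ j : Fin n, (j : ℕ) ≠ i → (j : ℕ) ≠ i + 1 →
        Function.update (Function.update g i0 p.1) i1 p.2 j = g j) := by
    intro g p j hj0 hj1
    have hj0' : j ≠ i0 := by simp [i0, Fin.ne_iff_vne, hj0]
    have hj1' : j ≠ i1 := by simp [i1, Fin.ne_iff_vne, hj1]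
    rw [Function.update_of_ne hj1', Function.update_of_ne hj0']
  have hprodsplit : ∀ (f g : Fin n → Fin N) (p : Fin N × Fin N),
      (∏ j, C (f j) (Function.update (Function.update g i0 p.1) i1 p.2 j)) =
        (C (f i0) p.1 * C (f i1) p.2) * ∏ j ∈ sᶜ, C (f j) (g j) := by
    intro f g p
    rw [← Finset.prod_mul_prod_compl s]
    congr 1
    · rw [hs, Finset.prod_pair hne]
      rw [Function.update_of_ne hne, Function.update_self, Function.update_self]
    · refine Finset.prod_congr rfl fun j hj => ?_
      rw [hs] at hj
      simp only [Finset.mem_compl, Finset.mem_insert, Finset.mem_singleton, not_or] at hj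
      congr 1
      exact hupd g p j (by simpa [i0, Fin.ne_iff_vne] using hj.1)
        (by simpa [i1, Fin.ne_iff_vne] using hj.2)
  rw [Matrix.mul_apply, Matrix.mul_apply]
  have hL : ∑ h, cProd (n := n) C f h * opAt R i h g =
      (∏ j ∈ sᶜ, C (f j) (g j)) * (cTwo C * R) (f i0, f i1) (g i0, g i1) := by
    rw [sum_reindex_two hi g _ (fun h hc => by
      simp only [opAt, dif_pos hi, if_neg hc, mul_zero])]
    rw [Matrix.mul_apply, Finset.mul_sum]
    refine Finset.sum_congr rfl fun p _ => ?_
    have hcond := hupd g p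
    simp only [cProd, opAt, dif_pos hi, if_pos hcond]
    rw [if_pos (by exact hcond)]
    rw [hprodsplit f g p]
    have h0 : Function.update (Function.update g i0 p.1) i1 p.2 i0 = p.1 := by
      rw [Function.update_of_ne hne, Function.update_self]
    have h1 : Function.update (Function.update g i0 p.1) i1 p.2 i1 = p.2 := by
      rw [Function.update_self]
    rw [h0, h1]
    simp only [cTwo]
    ring
  have hR : ∑ h, opAt R i f h * cProd (n := n) C h g =
      (∏ j ∈ sᶜ, C (f j) (g j)) * (R * cTwo C) (f i0, f i1) (g i0, g i1) := by
    rw [sum_reindex_two hi f _ (fun h hc => by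
      have hc' : ¬(∀ j : Fin n, (j : ℕ) ≠ i → (j : ℕ) ≠ i + 1 → f j = h j) := by
        intro hall; exact hc fun j h0 h1 => (hall j h0 h1).symm
      simp only [opAt, dif_pos hi, if_neg hc', zero_mul])]
    rw [Matrix.mul_apply, Finset.mul_sum]
    refine Finset.sum_congr rfl fun p _ => ?_
    have hcond' : ∀ j : Fin n, (j : ℕ) ≠ i → (j : ℕ) ≠ i + 1 →
        f j = Function.update (Function.update f i0 p.1) i1 p.2 j :=
      fun j h0 h1 => (hupd f p j h0 h1).symm
    simp only [cProd, opAt, dif_pos hi, if_pos hcond']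
    rw [if_pos (by exact hcond')]
    have hsplit : (∏ j, C (Function.update (Function.update f i0 p.1) i1 p.2 j) (g j)) =
        (C p.1 (g i0) * C p.2 (g i1)) * ∏ j ∈ sᶜ, C (f j) (g j) := by
      rw [← Finset.prod_mul_prod_compl s]
      congr 1
      · rw [hs, Finset.prod_pair hne]
        rw [Function.update_of_ne hne, Function.update_self, Function.update_self]
      · refine Finset.prod_congr rfl fun j hj => ?_
        rw [hs] at hj
        simp only [Finset.mem_compl, Finset.mem_insert, Finset.mem_singleton, not_or] at hj
        congr 1
        exact hupd f p j (by simpa [i0, Fin.ne_iff_vne] using hj.1)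
          (by simpa [i1, Fin.ne_iff_vne] using hj.2)
    rw [hsplit]
    have h0 : Function.update (Function.update f i0 p.1) i1 p.2 i0 = p.1 := by
      rw [Function.update_of_ne hne, Function.update_self]
    have h1 : Function.update (Function.update f i0 p.1) i1 p.2 i1 = p.2 := by
      rw [Function.update_self]
    rw [h0, h1]
    simp only [cTwo]
    ring
  rw [hL, hR, hRC]

/-- the cyclic property of the `R`-trace
`Tr_{R(1…k)} X = Tr(C₁⋯Cₖ X)`: for any `F` in the subring generated by the
operators `R₁,…,R_{k-1}`, `Tr_{R(1…k)}(F X) = Tr_{R(1…k)}(X F)`. -/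
theorem rTrace_cyclic {N n : ℕ}
    (R : Matrix (Fin N × Fin N) (Fin N × Fin N) ℂ) (C : Matrix (Fin N) (Fin N) ℂ)
    (hbraid : opAt (n := 3) R 0 * opAt (n := 3) R 1 * opAt (n := 3) R 0 =
      opAt (n := 3) R 1 * opAt (n := 3) R 0 * opAt (n := 3) R 1)
    (hRC : R * cTwo C = cTwo C * R)
    (F : Matrix (Fin n → Fin N) (Fin n → Fin N) ℂ)
    (hF : F ∈ Subring.closure
      {M : Matrix (Fin n → Fin N) (Fin n → Fin N) ℂ | ∃ i : ℕ, i + 1 < n ∧ M = opAt R i})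
    (X : Matrix (Fin n → Fin N) (Fin n → Fin N) ℂ) :
    Matrix.trace (cProd (n := n) C * (F * X)) =
      Matrix.trace (cProd (n := n) C * (X * F)) := by
  have hcomm : cProd (n := n) C * F = F * cProd (n := n) C := by
    have hle : Subring.closure
        {M : Matrix (Fin n → Fin N) (Fin n → Fin N) ℂ | ∃ i : ℕ, i + 1 < n ∧ M = opAt R i} ≤
        Subring.centralizer {cProd (n := n) C} := by
      rw [Subring.closure_le]
      rintro M ⟨i, hi, rfl⟩
      exact Subring.mem_centralizer_iff.mpr fun c hc => by
        rw [Set.mem_singleton_iff] at hc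
        rw [hc]
        exact cProd_comm_opAt R C hRC hi
    exact Subring.mem_centralizer_iff.mp (hle hF) _ rfl
  calc Matrix.trace (cProd (n := n) C * (F * X))
      = Matrix.trace (cProd (n := n) C * F * X) := by rw [mul_assoc]
    _ = Matrix.trace (F * cProd (n := n) C * X) := by rw [hcomm]
    _ = Matrix.trace (F * (cProd (n := n) C * X)) := by rw [mul_assoc]
    _ = Matrix.trace (cProd (n := n) C * X * F) := Matrix.trace_mul_comm _ _
    _ = Matrix.trace (cProd (n := n) C * (X * F)) := by rw [mul_assoc]
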